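/- arXiv:1608.00722 — 3 statements merged into one kernel-verified Lean document; each statement's English description precedes it below -/
import Mathlib

section
/- (Proposition 3.2, Type-II BPSK symbols.) Let P ≥ 0 and B ≥ 0. For every complex number z with |z|² = B, the probability that a real Gaussian random variable with mean 0 and variance 1/2 is at least −√P − Re(z) is at least 1/2 − (1/2)·erf(√B − √P); moreover, equality holds for the choice z = −√B (a real spoofing signal opposite to the transmitted symbol). Formally: for all z : ℂ with Complex.abs z ^ 2 = B, ((gaussianReal 0 (1/2)) (Set.Ici (−√P − z.re))).toReal ≥ 1/2 − (1/2)·erf(√B − √P), with equality when z = (−√B : ℂ). -/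
open MeasureTheory ProbabilityTheory Real Set
open scoped NNReal

noncomputable def erf (x : ℝ) : ℝ :=
  (2 / Real.sqrt Real.pi) * ∫ t in (0:ℝ)..x, Real.exp (-t^2)

lemma integrable_exp_neg_sq : Integrable (fun x : ℝ => Real.exp (-x^2)) := by
  have := integrable_exp_neg_mul_sq (b := (1:ℝ)) one_pos
  simpa using this

lemma integral_exp_neg_sq_Iic_zero :
    (∫ x in Iic (0:ℝ), Real.exp (-x^2)) = Real.sqrt Real.pi / 2 := by
  have hre : (∫ x : ℝ, Real.exp (-x^2)) = Real.sqrt Real.pi := by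
    have := integral_gaussian (1:ℝ)
    simpa using this
  have hsym : (∫ x in Iic (0:ℝ), Real.exp (-x^2)) = ∫ x in Ioi (0:ℝ), Real.exp (-x^2) := by
    rw [← neg_zero, ← integral_comp_neg_Iic 0 (fun x => Real.exp (-x^2))]
    norm_num
  have hsum := intervalIntegral.integral_Iic_add_Ioi (b := (0:ℝ)) (f := fun x => Real.exp (-x^2))
    integrable_exp_neg_sq.integrableOn integrable_exp_neg_sq.integrableOn
  rw [hre, ← hsym] at hsum
  linarith

lemma integral_exp_neg_sq_Ici (a : ℝ) :
    (∫ x in Ici a, Real.exp (-x^2)) =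
      Real.sqrt Real.pi / 2 - ∫ t in (0:ℝ)..a, Real.exp (-t^2) := by
  have hre : (∫ x : ℝ, Real.exp (-x^2)) = Real.sqrt Real.pi := by
    have := integral_gaussian (1:ℝ)
    simpa using this
  have hsum := intervalIntegral.integral_Iic_add_Ioi (b := a) (f := fun x => Real.exp (-x^2))
    integrable_exp_neg_sq.integrableOn integrable_exp_neg_sq.integrableOn
  have hIic := intervalIntegral.integral_Iic_sub_Iic
    (f := fun x => Real.exp (-x^2)) (μ := volume) (a := (0:ℝ)) (b := a)
    integrable_exp_neg_sq.integrableOn integrable_exp_neg_sq.integrableOn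
  rw [integral_exp_neg_sq_Iic_zero] at hIic
  have hIci : (∫ x in Ici a, Real.exp (-x^2)) = ∫ x in Ioi a, Real.exp (-x^2) :=
    integral_Ici_eq_integral_Ioi
  rw [hre] at hsum
  rw [hIci]
  linarith

lemma gauss_half_Ici (a : ℝ) :
    ((gaussianReal 0 (1/2)) (Set.Ici a)).toReal = 1/2 - (1/2) * erf a := by
  have hv : ((1:ℝ≥0)/2) ≠ 0 := by norm_num
  rw [gaussianReal_apply_eq_integral 0 hv]
  have hpdf : ∀ x : ℝ, gaussianPDFReal 0 (1/2) x = (Real.sqrt Real.pi)⁻¹ * Real.exp (-x^2) := by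
    intro x
    rw [gaussianPDFReal]
    push_cast
    norm_num
    have h2 : Real.sqrt 2 ≠ 0 := by positivity
    field_simp
  have h1 : (∫ x in Ici a, gaussianPDFReal 0 (1/2) x) =
      (Real.sqrt Real.pi)⁻¹ * ∫ x in Ici a, Real.exp (-x^2) := by
    simp_rw [hpdf]
    rw [integral_const_mul]
  have hπ : (0:ℝ) < Real.sqrt Real.pi := Real.sqrt_pos.mpr Real.pi_pos
  rw [ENNReal.toReal_ofReal (by
    rw [h1]
    positivity), h1, integral_exp_neg_sq_Ici, erf, mul_sub]
  have h2 : (Real.sqrt Real.pi)⁻¹ * (Real.sqrt Real.pi / 2) = 1/2 := by field_simp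
  rw [h2]
  ring

theorem stmt_2 (P B : ℝ) (hP : 0 ≤ P) (hB : 0 ≤ B) :
    (∀ z : ℂ, ‖z‖ ^ 2 = B →
       ((gaussianReal 0 (1/2)) (Set.Ici (-Real.sqrt P - z.re))).toReal ≥
         1/2 - (1/2) * erf (Real.sqrt B - Real.sqrt P)) ∧
    ((gaussianReal 0 (1/2))
         (Set.Ici (-Real.sqrt P - ((-Real.sqrt B : ℂ)).re))).toReal =
       1/2 - (1/2) * erf (Real.sqrt B - Real.sqrt P) := by
  constructor
  · intro z hz
    have hzre : -Real.sqrt B ≤ z.re := by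
      have h1 : |z.re| ≤ ‖z‖ := Complex.abs_re_le_norm z
      have h2 : ‖z‖ = Real.sqrt B := by
        rw [← hz, Real.sqrt_sq (norm_nonneg z)]
      have := neg_abs_le z.re
      linarith [h1, h2 ▸ h1]
    have hle : -Real.sqrt P - z.re ≤ Real.sqrt B - Real.sqrt P := by linarith
    have hsub : Set.Ici (Real.sqrt B - Real.sqrt P) ⊆ Set.Ici (-Real.sqrt P - z.re) :=
      Ici_subset_Ici.mpr hle
    have hmono := measure_mono (μ := gaussianReal 0 (1/2)) hsub
    have hfin : (gaussianReal 0 (1/2)) (Set.Ici (-Real.sqrt P - z.re)) ≠ ⊤ :=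
      measure_ne_top _ _
    have := ENNReal.toReal_mono hfin hmono
    calc ((gaussianReal 0 (1/2)) (Set.Ici (-Real.sqrt P - z.re))).toReal
        ≥ ((gaussianReal 0 (1/2)) (Set.Ici (Real.sqrt B - Real.sqrt P))).toReal := this
      _ = 1/2 - (1/2) * erf (Real.sqrt B - Real.sqrt P) := gauss_half_Ici _
  · have : -Real.sqrt P - ((-Real.sqrt B : ℂ)).re = Real.sqrt B - Real.sqrt P := by
      simp; ring
    rw [this, gauss_half_Ici]
end

section
/- (Lemma 3.2, low-power case.) Let 0 ≤ P ≤ 2 and define f₂ : ℝ → ℝ by f₂(B) = 1/2 − (1/2)·erf(√B − √P). Then f₂ is convex on [0, ∞) (ConvexOn ℝ (Set.Ici 0) f₂). -/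
open MeasureTheory ProbabilityTheory Real Set

lemma erf_hasDerivAt (x : ℝ) :
    HasDerivAt erf (2 / Real.sqrt Real.pi * Real.exp (-x^2)) x := by
  have hc : Continuous fun t : ℝ => Real.exp (-t^2) := by continuity
  have h := (hc.integral_hasStrictDerivAt 0 x).hasDerivAt
  exact h.const_mul (2 / Real.sqrt Real.pi)

lemma exp_log_half {B : ℝ} (hB : 0 < B) :
    Real.exp (Real.log B / 2) = Real.sqrt B := by
  rw [Real.sqrt_eq_rpow, Real.rpow_def_of_pos hB]
  ring_nf

theorem stmt_5 (P : ℝ) (hP0 : 0 ≤ P) (hP2 : P ≤ 2)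
    (f₂ : ℝ → ℝ) (hf₂ : ∀ B, f₂ B = 1/2 - (1/2) * erf (Real.sqrt B - Real.sqrt P)) :
    ConvexOn ℝ (Set.Ici 0) f₂ := by
  set c : ℝ := Real.sqrt P with hc
  have hc0 : 0 ≤ c := Real.sqrt_nonneg P
  have hc2 : c ^ 2 ≤ 2 := by rw [hc, Real.sq_sqrt hP0]; exact hP2
  have hfe : f₂ = fun B => 1/2 - 1/2 * erf (Real.sqrt B - c) := funext hf₂
  rw [hfe]
  -- the candidate derivative
  set d : ℝ → ℝ := fun B =>
    -(1/2 * (2 / Real.sqrt Real.pi * Real.exp (-(Real.sqrt B - c)^2) *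
      (1 / (2 * Real.sqrt B)))) with hd
  have hderiv : ∀ B ∈ Ioi (0:ℝ),
      HasDerivAt (fun B => 1/2 - 1/2 * erf (Real.sqrt B - c)) (d B) B := by
    intro B hB
    have hB' : (B : ℝ) ≠ 0 := ne_of_gt hB
    have h1 : HasDerivAt (fun B => Real.sqrt B - c) (1 / (2 * Real.sqrt B)) B :=
      (Real.hasDerivAt_sqrt hB').sub_const c
    have h2 := (erf_hasDerivAt (Real.sqrt B - c)).comp B h1
    have h3 := (h2.const_mul (1/2 : ℝ)).const_sub (1/2)
    exact h3
  -- erf is continuous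
  have herfc : Continuous erf := by
    have : Differentiable ℝ erf := fun x => (erf_hasDerivAt x).differentiableAt
    exact this.continuous
  have hcont : ContinuousOn (fun B => 1/2 - 1/2 * erf (Real.sqrt B - c)) (Ici 0) :=
    (continuous_const.sub (continuous_const.mul
      (herfc.comp (Real.continuous_sqrt.sub continuous_const)))).continuousOn
  -- the auxiliary function g
  set g : ℝ → ℝ := fun B => (Real.sqrt B - c)^2 + Real.log B / 2 with hg
  have hgderiv : ∀ B ∈ Ioi (0:ℝ),
      HasDerivAt g (2 * (Real.sqrt B - c) * (1 / (2 * Real.sqrt B)) + B⁻¹ / 2) B := by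
    intro B hB
    have hB' : (B : ℝ) ≠ 0 := ne_of_gt hB
    have h1 : HasDerivAt (fun B => Real.sqrt B - c) (1 / (2 * Real.sqrt B)) B :=
      (Real.hasDerivAt_sqrt hB').sub_const c
    have h2 : HasDerivAt (fun B => (Real.sqrt B - c)^2)
        (2 * (Real.sqrt B - c) * (1 / (2 * Real.sqrt B))) B := by
      have := h1.fun_pow 2
      simpa [mul_comm, mul_assoc, mul_left_comm] using this
    exact h2.add ((Real.hasDerivAt_log hB').div_const 2)
  have hgmono : MonotoneOn g (Ioi (0:ℝ)) := by
    apply monotoneOn_of_deriv_nonneg (convex_Ioi 0)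
    · exact fun B hB => (hgderiv B hB).continuousAt.continuousWithinAt
    · rw [interior_Ioi]
      exact fun B hB => (hgderiv B hB).differentiableAt.differentiableWithinAt
    · rw [interior_Ioi]
      intro B hB
      rw [(hgderiv B hB).deriv]
      have hs : 0 < Real.sqrt B := Real.sqrt_pos.mpr hB
      have hsq : Real.sqrt B ^ 2 = B := Real.sq_sqrt (le_of_lt hB)
      set s := Real.sqrt B
      have key : 2 * (s - c) * (1 / (2 * s)) + B⁻¹ / 2
          = (s^2 - c * s + 1/2) / s^2 := by
        rw [← hsq]; field_simp
      rw [key]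
      apply div_nonneg _ (sq_nonneg s)
      nlinarith [sq_nonneg (s - c/2)]
  -- rewrite d via g
  have hdg : ∀ B ∈ Ioi (0:ℝ),
      d B = -(1 / (2 * Real.sqrt Real.pi)) * Real.exp (-(g B)) := by
    intro B hB
    have hs : 0 < Real.sqrt B := Real.sqrt_pos.mpr hB
    have hpi : (0:ℝ) < Real.sqrt Real.pi := Real.sqrt_pos.mpr Real.pi_pos
    have : Real.exp (-(g B)) = Real.exp (-(Real.sqrt B - c)^2) / Real.sqrt B := by
      rw [hg]
      have : -((Real.sqrt B - c)^2 + Real.log B / 2)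
          = -(Real.sqrt B - c)^2 + -(Real.log B / 2) := by ring
      rw [this, Real.exp_add, Real.exp_neg (Real.log B / 2), exp_log_half hB]
      ring
    rw [this, hd]
    field_simp
  have hdmono : MonotoneOn d (Ioi (0:ℝ)) := by
    intro x hx y hy hxy
    rw [hdg x hx, hdg y hy]
    have h1 : Real.exp (-(g y)) ≤ Real.exp (-(g x)) :=
      Real.exp_le_exp.mpr (neg_le_neg (hgmono hx hy hxy))
    have hpi : (0:ℝ) < Real.sqrt Real.pi := Real.sqrt_pos.mpr Real.pi_pos
    have hk : (0:ℝ) ≤ 1 / (2 * Real.sqrt Real.pi) := by positivity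
    nlinarith
  apply MonotoneOn.convexOn_of_deriv (convex_Ici 0) hcont
  · rw [interior_Ici]
    exact fun B hB => (hderiv B hB).differentiableAt.differentiableWithinAt
  · rw [interior_Ici]
    intro x hx y hy hxy
    rw [(hderiv x hx).deriv, (hderiv y hy).deriv]
    exact hdmono hx hy hxy
end

section
/- (Proposition 4.1, optimal spoofing signal for a QPSK Type-I symbol.) Let P ≥ 0 and A ≥ 0. For all real z_R ≥ 0 and z_I ≥ 0 with z_R² + z_I² = A, one has (1/2 + (1/2)·erf(z_R + √(P/2)))·(1/2 + (1/2)·erf(z_I + √(P/2))) ≤ (1/2 + (1/2)·erf(√(A/2) + √(P/2)))². In particular, the success probability is maximized (equivalently, the conditional SSER g₁(A) = 1 − (1/2 + (1/2)·erf(√(A/2) + √(P/2)))² is attained) by the balanced choice z_R = z_I = √(A/2). -/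
open MeasureTheory ProbabilityTheory Real Set

private lemma erf_cont : Continuous fun t : ℝ => Real.exp (-t^2) := by fun_prop

private lemma erf_intable (a b : ℝ) :
    IntervalIntegrable (fun t : ℝ => Real.exp (-t^2)) volume a b :=
  erf_cont.intervalIntegrable a b

private lemma erf_mono : Monotone erf := by
  intro x y hxy
  unfold erf
  have h := intervalIntegral.integral_add_adjacent_intervals (a := (0:ℝ)) (b := x) (c := y)
    (erf_intable 0 x) (erf_intable x y)
  have hI : 0 ≤ ∫ t in x..y, Real.exp (-t^2) := by
    apply intervalIntegral.integral_nonneg hxy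
    intro t _; positivity
  have hC : (0:ℝ) ≤ 2 / Real.sqrt Real.pi := by positivity
  nlinarith [hC, hI]

private lemma erf_nonneg {x : ℝ} (hx : 0 ≤ x) : 0 ≤ erf x := by
  have h0 : erf 0 = 0 := by simp [erf]
  have := erf_mono hx
  linarith

private lemma erf_midpoint {a d : ℝ} (ha : 0 ≤ a) (hd : 0 ≤ d) :
    erf (a + 2*d) - erf (a + d) ≤ erf (a + d) - erf a := by
  unfold erf
  have h1 := intervalIntegral.integral_add_adjacent_intervals (a := (0:ℝ)) (b := a)
    (c := a + d) (erf_intable 0 a) (erf_intable a (a+d))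
  have h2 := intervalIntegral.integral_add_adjacent_intervals (a := (0:ℝ)) (b := a + d)
    (c := a + 2*d) (erf_intable 0 (a+d)) (erf_intable (a+d) (a+2*d))
  have hsub : (∫ t in (a+d)..(a+2*d), Real.exp (-t^2))
      = ∫ t in a..(a+d), Real.exp (-(t+d)^2) := by
    rw [intervalIntegral.integral_comp_add_right (fun t : ℝ => Real.exp (-t^2)) d]
    congr 1 <;> ring
  have hmono : (∫ t in a..(a+d), Real.exp (-(t+d)^2))
      ≤ ∫ t in a..(a+d), Real.exp (-t^2) := by
    apply intervalIntegral.integral_mono_on (by linarith)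
    · exact ((erf_cont.comp (by fun_prop)).intervalIntegrable a (a+d))
    · exact erf_intable a (a+d)
    · intro t ht
      rcases ht with ⟨ht1, _⟩
      have h0t : 0 ≤ t := le_trans ha ht1
      have : t^2 ≤ (t+d)^2 := by nlinarith
      exact Real.exp_le_exp.2 (by linarith)
  have hC : (0:ℝ) ≤ 2 / Real.sqrt Real.pi := by positivity
  have key : (∫ t in (a+d)..(a+2*d), Real.exp (-t^2))
      ≤ ∫ t in a..(a+d), Real.exp (-t^2) := by rw [hsub]; exact hmono
  nlinarith [key, hC]

theorem stmt_10 (P A : ℝ) (hP : 0 ≤ P) (hA : 0 ≤ A) :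
    ∀ zR zI : ℝ, 0 ≤ zR → 0 ≤ zI → zR^2 + zI^2 = A →
      (1/2 + (1/2) * erf (zR + Real.sqrt (P/2))) *
        (1/2 + (1/2) * erf (zI + Real.sqrt (P/2))) ≤
      (1/2 + (1/2) * erf (Real.sqrt (A/2) + Real.sqrt (P/2)))^2 := by
  have main : ∀ zR zI : ℝ, 0 ≤ zR → 0 ≤ zI → zR ≤ zI → zR^2 + zI^2 = A →
      (1/2 + (1/2) * erf (zR + Real.sqrt (P/2))) *
        (1/2 + (1/2) * erf (zI + Real.sqrt (P/2))) ≤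
      (1/2 + (1/2) * erf (Real.sqrt (A/2) + Real.sqrt (P/2)))^2 := by
    intro zR zI hzR hzI hle hsum
    set c := Real.sqrt (P/2) with hc
    have hc0 : 0 ≤ c := Real.sqrt_nonneg _
    set s := Real.sqrt (A/2) with hs
    have hs0 : 0 ≤ s := Real.sqrt_nonneg _
    have hs2 : s^2 = A/2 := Real.sq_sqrt (by linarith)
    -- QM-AM : zR + zI ≤ 2s
    have hqm : zR + zI ≤ 2*s := by nlinarith [sq_nonneg (zR - zI), sq_nonneg (zR + zI - 2*s)]
    set m := (zR + zI)/2 with hm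
    have hd : 0 ≤ m - zR := by simp only [hm]; linarith
    -- midpoint concavity with a = zR + c, d = m - zR
    have hmid := erf_midpoint (a := zR + c) (d := m - zR) (by linarith) hd
    have ha1 : zR + c + (m - zR) = m + c := by ring
    have ha2 : zR + c + 2*(m - zR) = zI + c := by simp only [hm]; ring
    rw [ha1, ha2] at hmid
    -- erf(zR+c) + erf(zI+c) ≤ 2 erf(m+c) ≤ 2 erf(s+c)
    have hms : erf (m + c) ≤ erf (s + c) := erf_mono (by simp only [hm]; linarith)
    have hR0 : 0 ≤ erf (zR + c) := erf_nonneg (by linarith)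
    have hI0 : 0 ≤ erf (zI + c) := erf_nonneg (by linarith)
    nlinarith [sq_nonneg (erf (zR + c) - erf (zI + c)), hmid, hms, hR0, hI0]
  intro zR zI hzR hzI hsum
  rcases le_total zR zI with h | h
  · exact main zR zI hzR hzI h hsum
  · rw [mul_comm]
    exact main zI zR hzI hzR h (by linarith)
end
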